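/- Let (C, W) satisfy the 'fork' condition. If f ∼_ℓ g (f and g are related by the least congruence containing R_ℓ^c), then f is a weak equivalence if and only if g is a weak equivalence. -/

import Mathlib

open CategoryTheory

variable {C : Type*} [Category C]

def RlC (W : MorphismProperty C) : HomRel C :=
  fun {A B} f g => ∃ (Z At : C) (α : A ⟶ Z) (σ : At ⟶ Z) (d0 d1 : A ⟶ At) (h : At ⟶ B),
    W σ ∧ d0 ≫ σ = α ∧ d1 ≫ σ = α ∧ d0 ≫ h = f ∧ d1 ≫ h = g

/-- The left "fork" condition: left homotopy diagrams may be chosen with `α` also a weak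
equivalence. -/
def ForkLeft (W : MorphismProperty C) : Prop :=
  ∀ {A B : C} (f g : A ⟶ B), RlC W f g →
    ∃ (Z At : C) (α : A ⟶ Z) (σ : At ⟶ Z) (d0 d1 : A ⟶ At) (h : At ⟶ B),
      W σ ∧ W α ∧ d0 ≫ σ = α ∧ d1 ≫ σ = α ∧ d0 ≫ h = f ∧ d1 ≫ h = g

/-- `∼_ℓ`: the least congruence containing `R_ℓ^c`, i.e. the kernel of the quotient
functor `C ⥤ C/R_ℓ^c`. -/
def simL (W : MorphismProperty C) : HomRel C :=
  fun {_ _} f g =>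
    (CategoryTheory.Quotient.functor (RlC W)).map f =
      (CategoryTheory.Quotient.functor (RlC W)).map g

/-- `RlC` is closed under pre- and post-composition. -/
lemma rlC_compClosure {W : MorphismProperty C} {A B : C} {f g : A ⟶ B}
    (h : HomRel.CompClosure (RlC W) f g) : RlC W f g := by
  induction h with
  | intro _ _ i m₁ m₂ j hm =>
    obtain ⟨Z, At, α, σ, d0, d1, k, hσ, h0, h1, hf, hg⟩ := hm
    exact ⟨Z, At, i ≫ α, σ, i ≫ d0, i ≫ d1, k ≫ j, hσ,
      by rw [Category.assoc, h0], by rw [Category.assoc, h1],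
      by rw [Category.assoc, reassoc_of% hf], by rw [Category.assoc, reassoc_of% hg]⟩

/-- Key step: a single `RlC`-step preserves membership in `W`, under the fork condition. -/
lemma rlC_iff {W : MorphismProperty C} [W.HasTwoOutOfThreeProperty] (hfork : ForkLeft W)
    {A B : C} {f g : A ⟶ B} (h : RlC W f g) : W f ↔ W g := by
  obtain ⟨Z, At, α, σ, d0, d1, k, hσ, hα, h0, h1, hf, hg⟩ := hfork f g h
  have hd0 : W d0 := W.of_postcomp d0 σ hσ (by rw [h0]; exact hα)
  have hd1 : W d1 := W.of_postcomp d1 σ hσ (by rw [h1]; exact hα)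
  subst hf hg
  constructor
  · intro hW
    exact W.comp_mem _ _ hd1 (W.of_precomp d0 k hd0 hW)
  · intro hW
    exact W.comp_mem _ _ hd0 (W.of_precomp d1 k hd1 hW)

/-- Remark 3.26: if `(C, W)` satisfies the "fork" condition and `f ∼_ℓ g`, then `f` is a
weak equivalence iff `g` is a weak equivalence. -/
theorem stmt13 (W : MorphismProperty C) [W.ContainsIdentities]
    [W.HasTwoOutOfThreeProperty] (hfork : ForkLeft W)
    {A B : C} (f g : A ⟶ B) (h : simL W f g) : W f ↔ W g := by
  have h' : Relation.EqvGen (fun a b => HomRel.CompClosure (RlC W) a b) f g := by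
    rw [← Quot.eq]; exact h
  clear h
  induction h' with
  | rel x y hxy => exact rlC_iff hfork (rlC_compClosure hxy)
  | refl x => rfl
  | symm x y _ ih => exact ih.symm
  | trans x y z _ _ ih₁ ih₂ => exact ih₁.trans ih₂
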